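/- Let p, q be coprime odd integers with 5 ≤ p < q. For indices (i,j) ≠ (i',j') with 1 ≤ i,i' ≤ (p-1)/2 and 1 ≤ j,j' ≤ (q-1)/2, the double sum Σ_{k=1}^{(p-1)/2} Σ_{l=1}^{(q-1)/2} sin((2i-1)(2k-1)qπ/p)·sin((2j-1)(2l-1)pπ/q)·sin((2i'-1)(2k-1)qπ/p)·sin((2j'-1)(2l-1)pπ/q) equals 0, and for (i,j) = (i',j') it equals pq/16. -/

import Mathlib

open Real Finset

lemma tele (θ : ℝ) (K : ℕ) :
    ∑ k ∈ Finset.Icc 1 K, (2 * Real.sin θ * Real.cos ((2*(k:ℝ)-1)*θ)) = Real.sin (2*K*θ) := by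
  induction K with
  | zero => simp
  | succ K ih =>
    rw [Finset.sum_Icc_succ_top (by omega : 1 ≤ K + 1), ih]
    have h := Real.sin_sub_sin ((2*(K+1):ℝ)*θ) ((2*K:ℝ)*θ)
    have h1 : ((2*(K+1):ℝ)*θ - (2*K:ℝ)*θ)/2 = θ := by ring
    have h2 : ((2*(K+1):ℝ)*θ + (2*K:ℝ)*θ)/2 = (2*((K:ℝ)+1)-1)*θ := by ring
    rw [h1, h2] at h
    push_cast
    linarith

lemma cos_sum (p : ℕ) (hpo : Odd p) (c : ℤ) (hc : Even c) (hpc : ¬ (p:ℤ) ∣ c) :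
    ∑ k ∈ Finset.Icc 1 ((p-1)/2), Real.cos ((2*(k:ℝ)-1) * ((c:ℝ) * Real.pi / p)) = -(1/2) := by
  obtain ⟨m, hm⟩ := hpo
  obtain ⟨d, hd⟩ := hc
  have hp1 : 1 ≤ p := by omega
  have hp0 : (0:ℝ) < p := by exact_mod_cast hp1
  set θ : ℝ := (c:ℝ) * Real.pi / p with hθ
  have hsin : Real.sin θ ≠ 0 := by
    intro h
    rw [Real.sin_eq_zero_iff] at h
    obtain ⟨n, hn⟩ := h
    apply hpc
    have hπ : Real.pi ≠ 0 := Real.pi_ne_zero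
    field_simp [hθ] at hn
    have : ((n * p : ℤ) : ℝ) = (c : ℝ) := by
      push_cast
      apply mul_right_cancel₀ hπ
      have hpθ : (p:ℝ) * θ = c * Real.pi := by rw [hθ]; field_simp
      linear_combination (p:ℝ) * hn + hpθ
    have : (n * p : ℤ) = c := by exact_mod_cast this
    exact ⟨n, by linarith [this]⟩
  have hK : ((p-1)/2 : ℕ) = m := by omega
  have htele := tele θ m
  have h2m : (2*(m:ℝ)) * θ = (2*(d:ℝ)) * Real.pi - θ := by
    have hpm : (p:ℝ) = 2*m + 1 := by exact_mod_cast congrArg (Nat.cast : ℕ → ℝ) hm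
    have hcd : (c:ℝ) = 2*d := by push_cast [hd]; ring
    rw [hθ, hpm, hcd]
    field_simp
    ring
  have hsin2 : Real.sin (2*(m:ℝ)*θ) = - Real.sin θ := by
    rw [h2m, Real.sin_sub]
    have e1 : Real.sin (2*(d:ℝ)*Real.pi) = 0 := by
      rw [show 2*(d:ℝ)*Real.pi = ((2*d:ℤ):ℝ)*Real.pi by push_cast; ring]
      exact Real.sin_int_mul_pi _
    have e2 : Real.cos (2*(d:ℝ)*Real.pi) = 1 := by
      rw [show 2*(d:ℝ)*Real.pi = ((d:ℤ):ℝ)*(2*Real.pi) by push_cast; ring]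
      exact Real.cos_int_mul_two_pi _
    rw [e1, e2]; ring
  rw [hK]
  have hfac : ∑ k ∈ Finset.Icc 1 m, Real.cos ((2*(k:ℝ)-1) * θ) =
      (∑ k ∈ Finset.Icc 1 m, (2 * Real.sin θ * Real.cos ((2*(k:ℝ)-1)*θ))) / (2 * Real.sin θ) := by
    rw [Finset.sum_div]
    apply Finset.sum_congr rfl
    intro k _
    field_simp
  rw [hfac, htele, hsin2]
  field_simp

lemma orth (p q : ℕ) (hcop : Nat.Coprime p q) (hpo : Odd p) (hp3 : 3 ≤ p)
    (i i' : ℕ) (hi : i ∈ Finset.Icc 1 ((p-1)/2)) (hi' : i' ∈ Finset.Icc 1 ((p-1)/2)) :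
    ∑ k ∈ Finset.Icc 1 ((p-1)/2),
      Real.sin ((2*(i:ℝ)-1)*(2*(k:ℝ)-1)*q*Real.pi/p) * Real.sin ((2*(i':ℝ)-1)*(2*(k:ℝ)-1)*q*Real.pi/p)
    = if i = i' then (p:ℝ)/4 else 0 := by
  simp only [Finset.mem_Icc] at hi hi'
  obtain ⟨m, hm⟩ := hpo
  have hq1 : 1 ≤ q := Nat.pos_of_ne_zero (by rintro rfl; simp [Nat.coprime_zero_right] at hcop; omega)
  set c1 : ℤ := 2*((i:ℤ) - i')*q with hc1
  set c2 : ℤ := 2*((i:ℤ) + i' - 1)*q with hc2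
  have hcopZ : IsCoprime (p:ℤ) (q:ℤ) := Int.isCoprime_iff_gcd_eq_one.mpr (by exact_mod_cast hcop)
  have hcop2 : IsCoprime (p:ℤ) (2:ℤ) := by
    rw [Int.isCoprime_iff_gcd_eq_one]
    have : Nat.Coprime p 2 := Nat.coprime_two_right.mpr ⟨m, hm⟩
    exact_mod_cast this
  -- rewrite each summand
  have key : ∀ k : ℕ,
      Real.sin ((2*(i:ℝ)-1)*(2*(k:ℝ)-1)*q*Real.pi/p) * Real.sin ((2*(i':ℝ)-1)*(2*(k:ℝ)-1)*q*Real.pi/p)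
      = (Real.cos ((2*(k:ℝ)-1) * ((c1:ℝ)*Real.pi/p)) - Real.cos ((2*(k:ℝ)-1) * ((c2:ℝ)*Real.pi/p))) / 2 := by
    intro k
    have h := Real.cos_sub_cos ((2*(k:ℝ)-1) * ((c1:ℝ)*Real.pi/p)) ((2*(k:ℝ)-1) * ((c2:ℝ)*Real.pi/p))
    have hp0 : (p:ℝ) ≠ 0 := by positivity
    have e1 : ((2*(k:ℝ)-1) * ((c1:ℝ)*Real.pi/p) + (2*(k:ℝ)-1) * ((c2:ℝ)*Real.pi/p))/2
        = (2*(i:ℝ)-1)*(2*(k:ℝ)-1)*q*Real.pi/p := by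
      rw [hc1, hc2]; push_cast; field_simp; ring
    have e2 : ((2*(k:ℝ)-1) * ((c1:ℝ)*Real.pi/p) - (2*(k:ℝ)-1) * ((c2:ℝ)*Real.pi/p))/2
        = -((2*(i':ℝ)-1)*(2*(k:ℝ)-1)*q*Real.pi/p) := by
      rw [hc1, hc2]; push_cast; field_simp; ring
    rw [e1, e2, Real.sin_neg] at h
    linarith
  simp only [key]
  rw [← Finset.sum_div, Finset.sum_sub_distrib]
  have hc2sum : ∑ k ∈ Finset.Icc 1 ((p-1)/2), Real.cos ((2*(k:ℝ)-1) * ((c2:ℝ)*Real.pi/p)) = -(1/2) := by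
    apply cos_sum p ⟨m, hm⟩ c2 ⟨((i:ℤ)+i'-1)*q, by ring⟩
    intro hdvd
    rw [hc2] at hdvd
    have h1 : (p:ℤ) ∣ 2*((i:ℤ)+i'-1) := hcopZ.dvd_of_dvd_mul_right hdvd
    have h2 : (p:ℤ) ∣ ((i:ℤ)+i'-1) := hcop2.dvd_of_dvd_mul_left h1
    have hpos : 0 < (i:ℤ)+i'-1 := by omega
    have := Int.le_of_dvd hpos h2
    omega
  rw [hc2sum]
  by_cases hii : i = i'
  · subst hii
    rw [if_pos rfl]
    have hc1zero : (c1:ℝ) = 0 := by rw [hc1]; push_cast; ring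
    have hcos1 : ∑ k ∈ Finset.Icc 1 ((p-1)/2), Real.cos ((2*(k:ℝ)-1) * ((c1:ℝ)*Real.pi/p)) = ((p-1)/2 : ℕ) := by
      have h1 : ∀ k ∈ Finset.Icc 1 ((p-1)/2), Real.cos ((2*(k:ℝ)-1) * ((c1:ℝ)*Real.pi/p)) = 1 := by
        intro k _
        rw [hc1zero]
        simp
      rw [Finset.sum_congr rfl h1, Finset.sum_const, Nat.card_Icc]
      simp
    rw [hcos1]
    have hK : (((p-1)/2 : ℕ) : ℝ) = m := by exact_mod_cast congrArg (Nat.cast : ℕ → ℝ) (by omega : (p-1)/2 = m)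
    have hpm : (p:ℝ) = 2*m+1 := by exact_mod_cast congrArg (Nat.cast : ℕ → ℝ) hm
    rw [hK, hpm]
    ring
  · simp only [if_neg hii]
    have hc1sum : ∑ k ∈ Finset.Icc 1 ((p-1)/2), Real.cos ((2*(k:ℝ)-1) * ((c1:ℝ)*Real.pi/p)) = -(1/2) := by
      apply cos_sum p ⟨m, hm⟩ c1 ⟨((i:ℤ)-i')*q, by ring⟩
      intro hdvd
      rw [hc1] at hdvd
      have h1 : (p:ℤ) ∣ 2*((i:ℤ)-i') := hcopZ.dvd_of_dvd_mul_right hdvd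
      have h2 : (p:ℤ) ∣ ((i:ℤ)-i') := hcop2.dvd_of_dvd_mul_left h1
      have h3 : (p:ℤ) ∣ |(i:ℤ)-i'| := (dvd_abs _ _).mpr h2
      have hpos : 0 < |(i:ℤ)-i'| := by
        rw [abs_pos]
        intro h
        exact hii (by omega)
      have hle := Int.le_of_dvd hpos h3
      rcases abs_cases ((i:ℤ)-i') with ⟨h4,_⟩|⟨h4,_⟩ <;> rw [h4] at hle <;> omega
    rw [hc1sum]
    ring

theorem stmt_14 (p q : ℕ) (hcop : Nat.Coprime p q) (hpo : Odd p) (hqo : Odd q)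
    (hp : 5 ≤ p) (hpq : p < q)
    (i i' j j' : ℕ)
    (hi : i ∈ Finset.Icc 1 ((p - 1) / 2)) (hi' : i' ∈ Finset.Icc 1 ((p - 1) / 2))
    (hj : j ∈ Finset.Icc 1 ((q - 1) / 2)) (hj' : j' ∈ Finset.Icc 1 ((q - 1) / 2)) :
    ((i, j) ≠ (i', j') →
      ∑ k ∈ Finset.Icc 1 ((p - 1) / 2), ∑ l ∈ Finset.Icc 1 ((q - 1) / 2),
        Real.sin ((2 * (i : ℝ) - 1) * (2 * (k : ℝ) - 1) * q * Real.pi / p) *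
        Real.sin ((2 * (j : ℝ) - 1) * (2 * (l : ℝ) - 1) * p * Real.pi / q) *
        (Real.sin ((2 * (i' : ℝ) - 1) * (2 * (k : ℝ) - 1) * q * Real.pi / p) *
         Real.sin ((2 * (j' : ℝ) - 1) * (2 * (l : ℝ) - 1) * p * Real.pi / q)) = 0) ∧
    ((i, j) = (i', j') →
      ∑ k ∈ Finset.Icc 1 ((p - 1) / 2), ∑ l ∈ Finset.Icc 1 ((q - 1) / 2),
        Real.sin ((2 * (i : ℝ) - 1) * (2 * (k : ℝ) - 1) * q * Real.pi / p) *
        Real.sin ((2 * (j : ℝ) - 1) * (2 * (l : ℝ) - 1) * p * Real.pi / q) *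
        (Real.sin ((2 * (i' : ℝ) - 1) * (2 * (k : ℝ) - 1) * q * Real.pi / p) *
         Real.sin ((2 * (j' : ℝ) - 1) * (2 * (l : ℝ) - 1) * p * Real.pi / q))
        = (p : ℝ) * q / 16) := by
  have hfac : ∑ k ∈ Finset.Icc 1 ((p - 1) / 2), ∑ l ∈ Finset.Icc 1 ((q - 1) / 2),
        Real.sin ((2 * (i : ℝ) - 1) * (2 * (k : ℝ) - 1) * q * Real.pi / p) *
        Real.sin ((2 * (j : ℝ) - 1) * (2 * (l : ℝ) - 1) * p * Real.pi / q) *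
        (Real.sin ((2 * (i' : ℝ) - 1) * (2 * (k : ℝ) - 1) * q * Real.pi / p) *
         Real.sin ((2 * (j' : ℝ) - 1) * (2 * (l : ℝ) - 1) * p * Real.pi / q))
      = (∑ k ∈ Finset.Icc 1 ((p - 1) / 2),
          Real.sin ((2 * (i : ℝ) - 1) * (2 * (k : ℝ) - 1) * q * Real.pi / p) *
          Real.sin ((2 * (i' : ℝ) - 1) * (2 * (k : ℝ) - 1) * q * Real.pi / p)) *
        (∑ l ∈ Finset.Icc 1 ((q - 1) / 2),
          Real.sin ((2 * (j : ℝ) - 1) * (2 * (l : ℝ) - 1) * p * Real.pi / q) *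
          Real.sin ((2 * (j' : ℝ) - 1) * (2 * (l : ℝ) - 1) * p * Real.pi / q)) := by
    rw [Finset.sum_mul_sum]
    apply Finset.sum_congr rfl
    intro k _
    apply Finset.sum_congr rfl
    intro l _
    ring
  have hOp := orth p q hcop hpo (by omega) i i' hi hi'
  have hOq := orth q p hcop.symm hqo (by omega) j j' hj hj'
  rw [hfac, hOp, hOq]
  constructor
  · intro hne
    have : i ≠ i' ∨ j ≠ j' := by
      by_contra h
      push_neg at h
      exact hne (by rw [h.1, h.2])
    rcases this with h | h
    · rw [if_neg h]; ring
    · rw [if_neg h]; ring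
  · intro heq
    have h1 : i = i' := (Prod.mk.injEq _ _ _ _ ▸ heq).1
    have h2 : j = j' := (Prod.mk.injEq _ _ _ _ ▸ heq).2
    rw [if_pos h1, if_pos h2]
    ring
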